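/- arXiv:2202.13520 — 8 statements merged into one kernel-verified Lean document; each statement's English description precedes it below -/
import Mathlib

section
/- In the all-defended setting, for every naive AM strategy π (i.e., π m ≥ 0 for all m and ∑_m π m ≤ 1), the naive malware strategy that attacks every environment with probability 1/2 (ρ m = 1/2 for all m) yields malware utility u_M(π, ρ) = (1/2)·(1 − (1/2)·∑_m π m) ≥ 1/4. Consequently, for every naive AM strategy π, the supremum of u_M(π, ·) over all malware strategies is at least 1/4. -/
/-- In the all-defended setting, for every naive AM strategy `π`,
the naive malware strategy attacking every environment with probability `1/2`
yields malware utility `(1/2) * (1 - (1/2) * ∑ π m) ≥ 1/4`; consequently the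
supremum of the malware's utility over all malware strategies is at least `1/4`.
Here `u_M(π, ρ) = (∑ m, e m * ρ m) * (1 - ∑ m, π m * ρ m)`. -/
theorem stmt_0 {M : Type*} [Fintype M] [Nonempty M]
    (e : M → ℝ) (he : ∀ m, 0 ≤ e m) (hesum : ∑ m, e m = 1)
    (π : M → ℝ) (hπ : ∀ m, 0 ≤ π m) (hπsum : ∑ m, π m ≤ 1) :
    (∑ m, e m * (1/2 : ℝ)) * (1 - ∑ m, π m * (1/2 : ℝ))
        = (1/2) * (1 - (1/2) * ∑ m, π m) ∧
    (1/4 : ℝ) ≤ (∑ m, e m * (1/2 : ℝ)) * (1 - ∑ m, π m * (1/2 : ℝ)) ∧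
    (1/4 : ℝ) ≤ sSup {u : ℝ | ∃ ρ : M → ℝ, (∀ m, 0 ≤ ρ m ∧ ρ m ≤ 1) ∧
        u = (∑ m, e m * ρ m) * (1 - ∑ m, π m * ρ m)} := by
  have h1 : (∑ m, e m * (1/2 : ℝ)) = 1/2 := by
    rw [← Finset.sum_mul, hesum, one_mul]
  have h2 : (∑ m, π m * (1/2 : ℝ)) = (1/2) * ∑ m, π m := by
    rw [← Finset.sum_mul, mul_comm]
  have heq : (∑ m, e m * (1/2 : ℝ)) * (1 - ∑ m, π m * (1/2 : ℝ))
      = (1/2) * (1 - (1/2) * ∑ m, π m) := by rw [h1, h2]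
  have hge : (1/4 : ℝ) ≤ (∑ m, e m * (1/2 : ℝ)) * (1 - ∑ m, π m * (1/2 : ℝ)) := by
    rw [heq]
    nlinarith [hπsum]
  refine ⟨heq, hge, ?_⟩
  have hmem : (∑ m, e m * (1/2 : ℝ)) * (1 - ∑ m, π m * (1/2 : ℝ)) ∈
      {u : ℝ | ∃ ρ : M → ℝ, (∀ m, 0 ≤ ρ m ∧ ρ m ≤ 1) ∧
        u = (∑ m, e m * ρ m) * (1 - ∑ m, π m * ρ m)} := by
    exact ⟨fun _ => 1/2, fun m => by norm_num, rfl⟩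
  have hbdd : BddAbove {u : ℝ | ∃ ρ : M → ℝ, (∀ m, 0 ≤ ρ m ∧ ρ m ≤ 1) ∧
      u = (∑ m, e m * ρ m) * (1 - ∑ m, π m * ρ m)} := by
    refine ⟨1, fun u hu => ?_⟩
    obtain ⟨ρ, hρ, rfl⟩ := hu
    have ha0 : 0 ≤ ∑ m, e m * ρ m :=
      Finset.sum_nonneg fun m _ => mul_nonneg (he m) (hρ m).1
    have ha1 : ∑ m, e m * ρ m ≤ 1 := by
      calc ∑ m, e m * ρ m ≤ ∑ m, e m :=
            Finset.sum_le_sum fun m _ => by nlinarith [(hρ m).2, he m]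
        _ = 1 := hesum
    have hb0 : 0 ≤ ∑ m, π m * ρ m :=
      Finset.sum_nonneg fun m _ => mul_nonneg (hπ m) (hρ m).1
    nlinarith
  calc (1/4 : ℝ) ≤ _ := hge
    _ ≤ _ := le_csSup hbdd hmem
end

section
/- In the all-defended setting, if the AM uses the Existence strategy π = e (generating a sandbox of type m with probability e m), then for every malware strategy ρ one has u_M(e, ρ) = (∑_m e m·ρ m)·(1 − ∑_m e m·ρ m) ≤ 1/4, and equality holds for the strategy ρ m = 1/2 for all m. Hence attacking every environment with probability 1/2 is a best response of the malware to the Existence strategy. -/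
/-- In the all-defended setting, against the Existence strategy
`π = e`, every malware strategy `ρ` gets utility
`(∑ m, e m * ρ m) * (1 - ∑ m, e m * ρ m) ≤ 1/4`, with equality for `ρ ≡ 1/2`.
Hence `ρ ≡ 1/2` is a best response of the malware to the Existence strategy. -/
theorem stmt_1 {M : Type*} [Fintype M] [Nonempty M]
    (e : M → ℝ) (he : ∀ m, 0 ≤ e m) (hesum : ∑ m, e m = 1) :
    (∀ ρ : M → ℝ, (∀ m, 0 ≤ ρ m ∧ ρ m ≤ 1) →
        (∑ m, e m * ρ m) * (1 - ∑ m, e m * ρ m) ≤ 1/4) ∧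
    (∑ m, e m * (1/2 : ℝ)) * (1 - ∑ m, e m * (1/2 : ℝ)) = 1/4 ∧
    (∀ ρ : M → ℝ, (∀ m, 0 ≤ ρ m ∧ ρ m ≤ 1) →
        (∑ m, e m * ρ m) * (1 - ∑ m, e m * ρ m) ≤
          (∑ m, e m * (1/2 : ℝ)) * (1 - ∑ m, e m * (1/2 : ℝ))) := by
  have key : ∀ x : ℝ, x * (1 - x) ≤ 1/4 := by intro x; nlinarith [sq_nonneg (x - 1/2)]
  have hhalf : (∑ m, e m * (1/2 : ℝ)) = 1/2 := by
    rw [← Finset.sum_mul, hesum]; ring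
  refine ⟨fun ρ _ => key _, by rw [hhalf]; norm_num, fun ρ _ => ?_⟩
  rw [hhalf]; norm_num; exact key _
end

section
/- (Theorem 1) In the all-defended setting with a naive AM: for every naive AM strategy π and every malware strategy ρ' that maximizes u_M(π, ·) over all malware strategies, the AM utility satisfies u_AM(π, ρ') ≤ 3/4. Moreover, for the Existence strategy π = e, the malware strategy ρ m = 1/2 for all m maximizes u_M(e, ·), and u_AM(e, ρ) = 3/4. Hence the Existence strategy is AM-optimal in equilibrium, guaranteeing AM utility exactly 3/4. -/
/-- Theorem 1: In the all-defended setting with a naive AM, where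
`u_M(π,ρ) = (∑ m, e m * ρ m) * (1 - ∑ m, π m * ρ m)` and `u_AM = 1 - u_M`:
for every naive AM strategy `π` and every malware best response `ρ'` to `π`,
`u_AM(π, ρ') ≤ 3/4`; moreover for the Existence strategy `π = e`, the strategy
`ρ ≡ 1/2` is a malware best response and `u_AM(e, ρ) = 3/4`.  Hence Existence is
AM-optimal in equilibrium, guaranteeing AM utility exactly `3/4`. -/
theorem stmt_2 {M : Type*} [Fintype M] [Nonempty M]
    (e : M → ℝ) (he : ∀ m, 0 ≤ e m) (hesum : ∑ m, e m = 1) :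
    (∀ π : M → ℝ, (∀ m, 0 ≤ π m) → ∑ m, π m ≤ 1 →
      ∀ ρ' : M → ℝ, (∀ m, 0 ≤ ρ' m ∧ ρ' m ≤ 1) →
        (∀ ρ : M → ℝ, (∀ m, 0 ≤ ρ m ∧ ρ m ≤ 1) →
          (∑ m, e m * ρ m) * (1 - ∑ m, π m * ρ m) ≤
            (∑ m, e m * ρ' m) * (1 - ∑ m, π m * ρ' m)) →
        1 - (∑ m, e m * ρ' m) * (1 - ∑ m, π m * ρ' m) ≤ 3/4) ∧
    (∀ ρ : M → ℝ, (∀ m, 0 ≤ ρ m ∧ ρ m ≤ 1) →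
        (∑ m, e m * ρ m) * (1 - ∑ m, e m * ρ m) ≤
          (∑ m, e m * (1/2 : ℝ)) * (1 - ∑ m, e m * (1/2 : ℝ))) ∧
    1 - (∑ m, e m * (1/2 : ℝ)) * (1 - ∑ m, e m * (1/2 : ℝ)) = 3/4 := by
  have hhalf : ∑ m, e m * (1/2 : ℝ) = 1/2 := by
    rw [← Finset.sum_mul, hesum]; ring
  refine ⟨?_, ?_, ?_⟩
  · intro π hπ hπsum ρ' hρ' hbest
    have h := hbest (fun _ => 1/2) (fun m => by norm_num)
    have h1 : ∑ m, e m * (1/2 : ℝ) = 1/2 := hhalf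
    have h2 : ∑ m, π m * (1/2 : ℝ) ≤ 1/2 := by
      rw [← Finset.sum_mul]; linarith
    nlinarith [h, h1, h2]
  · intro ρ hρ
    rw [hhalf]
    nlinarith [sq_nonneg (∑ m, e m * ρ m - 1/2)]
  · rw [hhalf]; norm_num
end

section
/- In the all-defended setting, for every sophisticated AM strategy π (i.e., π r m ≥ 0 for all r, m and ∑_m π r m ≤ 1 for every r), the naive malware strategy that attacks every environment with probability 1/2 yields malware utility u_M(π, ρ) = (1/2)·∑_r e r·(1 − (1/2)·∑_m π r m) ≥ 1/4. Consequently, for every sophisticated AM strategy, the supremum of u_M(π, ·) over all malware strategies is at least 1/4. -/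
/-- In the all-defended setting, for every sophisticated AM
strategy `π`, the naive malware strategy attacking every environment with
probability `1/2` yields malware utility
`(1/2) * ∑ r, e r * (1 - (1/2) * ∑ m, π r m) ≥ 1/4`; consequently the supremum
of `u_M(π, ·)` over all malware strategies is at least `1/4`.  Here
`u_M(π,ρ) = ∑ r, e r * ρ r * (1 - ∑ m, π r m * ρ m)`. -/
theorem stmt_3 {M : Type*} [Fintype M] [Nonempty M]
    (e : M → ℝ) (he : ∀ r, 0 ≤ e r) (hesum : ∑ r, e r = 1)
    (π : M → M → ℝ) (hπ : ∀ r m, 0 ≤ π r m) (hπsum : ∀ r, ∑ m, π r m ≤ 1) :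
    (∑ r, e r * (1/2 : ℝ) * (1 - ∑ m, π r m * (1/2 : ℝ)))
        = (1/2) * ∑ r, e r * (1 - (1/2) * ∑ m, π r m) ∧
    (1/4 : ℝ) ≤ ∑ r, e r * (1/2 : ℝ) * (1 - ∑ m, π r m * (1/2 : ℝ)) ∧
    (1/4 : ℝ) ≤ sSup {u : ℝ | ∃ ρ : M → ℝ, (∀ m, 0 ≤ ρ m ∧ ρ m ≤ 1) ∧
        u = ∑ r, e r * ρ r * (1 - ∑ m, π r m * ρ m)} := by
  have key : (1/4 : ℝ) ≤ ∑ r, e r * (1/2 : ℝ) * (1 - ∑ m, π r m * (1/2 : ℝ)) := by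
    calc (1/4 : ℝ) = ∑ r, e r * (1/4 : ℝ) := by
          rw [← Finset.sum_mul, hesum, one_mul]
      _ ≤ ∑ r, e r * (1/2 : ℝ) * (1 - ∑ m, π r m * (1/2 : ℝ)) := by
          apply Finset.sum_le_sum
          intro r _
          have h1 : ∑ m, π r m * (1/2 : ℝ) ≤ 1/2 := by
            rw [← Finset.sum_mul]
            nlinarith [hπsum r]
          nlinarith [he r]
  refine ⟨?_, key, ?_⟩
  · rw [Finset.mul_sum]
    apply Finset.sum_congr rfl
    intro r _
    rw [← Finset.sum_mul]
    ring
  have hmem : (∑ r, e r * (1/2 : ℝ) * (1 - ∑ m, π r m * (1/2 : ℝ))) ∈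
      {u : ℝ | ∃ ρ : M → ℝ, (∀ m, 0 ≤ ρ m ∧ ρ m ≤ 1) ∧
        u = ∑ r, e r * ρ r * (1 - ∑ m, π r m * ρ m)} :=
    ⟨fun _ => (1/2 : ℝ), fun _ => ⟨by norm_num, by norm_num⟩, rfl⟩
  have hbdd : BddAbove {u : ℝ | ∃ ρ : M → ℝ, (∀ m, 0 ≤ ρ m ∧ ρ m ≤ 1) ∧
        u = ∑ r, e r * ρ r * (1 - ∑ m, π r m * ρ m)} := by
    refine ⟨1, ?_⟩
    rintro u ⟨ρ, hρ, rfl⟩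
    calc ∑ r, e r * ρ r * (1 - ∑ m, π r m * ρ m) ≤ ∑ r, e r := by
          apply Finset.sum_le_sum
          intro r _
          have h0 : 0 ≤ ∑ m, π r m * ρ m :=
            Finset.sum_nonneg fun m _ => mul_nonneg (hπ r m) (hρ m).1
          nlinarith [mul_nonneg (mul_nonneg (he r) (hρ r).1) h0, mul_le_of_le_one_right (he r) (hρ r).2]
      _ = 1 := hesum
  exact key.trans (le_csSup hbdd hmem)
end

section
/- In the all-defended setting, let π be the mirror (emulate-the-current-machine) sophisticated AM strategy defined by π r r = 1 and π r m = 0 for m ≠ r. Then for every malware strategy ρ, u_M(π, ρ) = ∑_r e r·ρ r·(1 − ρ r) ≤ 1/4, with equality when ρ r = 1/2 for all r. Hence attacking with probability 1/2 everywhere is a best response of the malware to the mirror strategy. -/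
/-- In the all-defended setting, let `π` be the mirror
(emulate-the-current-machine) sophisticated AM strategy, `π r r = 1` and
`π r m = 0` for `m ≠ r`.  Then for every malware strategy `ρ`,
`u_M(π, ρ) = ∑ r, e r * ρ r * (1 - ρ r) ≤ 1/4`, with equality when `ρ ≡ 1/2`.
Hence `ρ ≡ 1/2` is a best response of the malware to the mirror strategy. -/
theorem stmt_4 {M : Type*} [Fintype M] [Nonempty M] [DecidableEq M]
    (e : M → ℝ) (he : ∀ r, 0 ≤ e r) (hesum : ∑ r, e r = 1)
    (π : M → M → ℝ) (hπ : ∀ r m, π r m = if m = r then 1 else 0) :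
    (∀ ρ : M → ℝ, (∀ m, 0 ≤ ρ m ∧ ρ m ≤ 1) →
        (∑ r, e r * ρ r * (1 - ∑ m, π r m * ρ m)) = ∑ r, e r * ρ r * (1 - ρ r) ∧
        (∑ r, e r * ρ r * (1 - ∑ m, π r m * ρ m)) ≤ 1/4) ∧
    (∑ r, e r * (1/2 : ℝ) * (1 - ∑ m, π r m * (1/2 : ℝ))) = 1/4 ∧
    (∀ ρ : M → ℝ, (∀ m, 0 ≤ ρ m ∧ ρ m ≤ 1) →
        (∑ r, e r * ρ r * (1 - ∑ m, π r m * ρ m)) ≤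
          ∑ r, e r * (1/2 : ℝ) * (1 - ∑ m, π r m * (1/2 : ℝ))) := by
  have hinner : ∀ (ρ : M → ℝ) (r : M), (∑ m, π r m * ρ m) = ρ r := by
    intro ρ r
    simp [hπ]
  have key : ∀ ρ : M → ℝ, (∀ m, 0 ≤ ρ m ∧ ρ m ≤ 1) →
      (∑ r, e r * ρ r * (1 - ∑ m, π r m * ρ m)) ≤ 1/4 := by
    intro ρ hρ
    calc (∑ r, e r * ρ r * (1 - ∑ m, π r m * ρ m))
        = ∑ r, e r * (ρ r * (1 - ρ r)) := by
          refine Finset.sum_congr rfl fun r _ => ?_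
          rw [hinner]; ring
      _ ≤ ∑ r, e r * (1/4) := by
          refine Finset.sum_le_sum fun r _ => ?_
          refine mul_le_mul_of_nonneg_left ?_ (he r)
          nlinarith [(hρ r).1, (hρ r).2, sq_nonneg (ρ r - 1/2)]
      _ = 1/4 := by rw [← Finset.sum_mul, hesum, one_mul]
  have heq : (∑ r, e r * (1/2 : ℝ) * (1 - ∑ m, π r m * (1/2 : ℝ))) = 1/4 := by
    have : ∀ r : M, e r * (1/2 : ℝ) * (1 - ∑ m, π r m * (1/2 : ℝ)) = e r * (1/4) := by
      intro r
      rw [hinner (fun _ => (1/2 : ℝ)) r]; ring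
    rw [Finset.sum_congr rfl fun r _ => this r, ← Finset.sum_mul, hesum, one_mul]
  refine ⟨fun ρ hρ => ⟨?_, key ρ hρ⟩, heq, fun ρ hρ => by rw [heq]; exact key ρ hρ⟩
  refine Finset.sum_congr rfl fun r _ => ?_
  rw [hinner]
end

section
/- (Theorem 2) In the all-defended setting with a sophisticated AM: for every sophisticated AM strategy π and every malware strategy ρ' that maximizes u_M(π, ·) over all malware strategies, the AM utility satisfies u_AM(π, ρ') ≤ 3/4. Moreover, for the mirror strategy π with π r r = 1 and π r m = 0 for m ≠ r, the malware strategy ρ m = 1/2 for all m maximizes u_M(π, ·), and u_AM(π, ρ) = 3/4. Hence emulating the machine being defended is an AM-optimal strategy in equilibrium, guaranteeing AM utility exactly 3/4. -/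
/-- Theorem 2: In the all-defended setting with a sophisticated AM,
where `u_M(π,ρ) = ∑ r, e r * ρ r * (1 - ∑ m, π r m * ρ m)` and `u_AM = 1 - u_M`:
for every sophisticated AM strategy `π` and every malware best response `ρ'` to
`π`, `u_AM(π, ρ') ≤ 3/4`; moreover for the mirror strategy
(`π r r = 1`, `π r m = 0` for `m ≠ r`), the strategy `ρ ≡ 1/2` is a malware
best response and `u_AM(π, ρ) = 3/4`.  Hence emulating the machine being
defended is AM-optimal in equilibrium, guaranteeing AM utility exactly `3/4`. -/
theorem stmt_5 {M : Type*} [Fintype M] [Nonempty M] [DecidableEq M]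
    (e : M → ℝ) (he : ∀ r, 0 ≤ e r) (hesum : ∑ r, e r = 1) :
    (∀ π : M → M → ℝ, (∀ r m, 0 ≤ π r m) → (∀ r, ∑ m, π r m ≤ 1) →
      ∀ ρ' : M → ℝ, (∀ m, 0 ≤ ρ' m ∧ ρ' m ≤ 1) →
        (∀ ρ : M → ℝ, (∀ m, 0 ≤ ρ m ∧ ρ m ≤ 1) →
          (∑ r, e r * ρ r * (1 - ∑ m, π r m * ρ m)) ≤
            ∑ r, e r * ρ' r * (1 - ∑ m, π r m * ρ' m)) →
        1 - (∑ r, e r * ρ' r * (1 - ∑ m, π r m * ρ' m)) ≤ 3/4) ∧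
    (∀ π : M → M → ℝ, (∀ r m, π r m = if m = r then 1 else 0) →
      (∀ ρ : M → ℝ, (∀ m, 0 ≤ ρ m ∧ ρ m ≤ 1) →
        (∑ r, e r * ρ r * (1 - ∑ m, π r m * ρ m)) ≤
          ∑ r, e r * (1/2 : ℝ) * (1 - ∑ m, π r m * (1/2 : ℝ))) ∧
      1 - (∑ r, e r * (1/2 : ℝ) * (1 - ∑ m, π r m * (1/2 : ℝ))) = 3/4) := by
  constructor
  · intro π hπ0 hπ1 ρ' hρ' hbest
    have h := hbest (fun _ => 1/2) (fun m => by norm_num)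
    have hlow : (1/4 : ℝ) ≤ ∑ r, e r * (1/2 : ℝ) * (1 - ∑ m, π r m * (1/2 : ℝ)) := by
      have : ∀ r ∈ Finset.univ, e r * (1/4 : ℝ) ≤
          e r * (1/2 : ℝ) * (1 - ∑ m, π r m * (1/2 : ℝ)) := by
        intro r _
        have hs : ∑ m, π r m * (1/2 : ℝ) ≤ 1/2 := by
          have := hπ1 r
          calc ∑ m, π r m * (1/2 : ℝ) = (∑ m, π r m) * (1/2 : ℝ) := by
                rw [Finset.sum_mul]
            _ ≤ 1/2 := by linarith
        nlinarith [he r]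
      have := Finset.sum_le_sum this
      have hq : ∑ r, e r * (1/4 : ℝ) = 1/4 := by
        rw [← Finset.sum_mul, hesum]; ring
      linarith
    linarith
  · intro π hπ
    have key : ∀ ρ : M → ℝ,
        (∑ r, e r * ρ r * (1 - ∑ m, π r m * ρ m)) = ∑ r, e r * ρ r * (1 - ρ r) := by
      intro ρ
      refine Finset.sum_congr rfl fun r _ => ?_
      congr 2
      have : ∑ m, π r m * ρ m = ρ r := by
        simp [hπ r]
      rw [this]
    have half : (∑ r, e r * (1/2 : ℝ) * (1 - ∑ m, π r m * (1/2 : ℝ))) = 1/4 := by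
      rw [key (fun _ => 1/2)]
      have : ∀ r, e r * (1/2 : ℝ) * (1 - 1/2) = e r * (1/4) := fun r => by ring
      rw [Finset.sum_congr rfl fun r _ => this r, ← Finset.sum_mul, hesum]; ring
    refine ⟨fun ρ hρ => ?_, by rw [half]; norm_num⟩
    rw [key ρ, half]
    have : ∀ r ∈ Finset.univ, e r * ρ r * (1 - ρ r) ≤ e r * (1/4 : ℝ) := by
      intro r _
      nlinarith [mul_nonneg (he r) (sq_nonneg (ρ r - 1/2))]
    have := Finset.sum_le_sum this
    have hq : ∑ r, e r * (1/4 : ℝ) = 1/4 := by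
      rw [← Finset.sum_mul, hesum]; ring
    linarith
end

section
/- (Theorem 3) Let (e, d) be a real-world setting with D = ∑_m d m satisfying D ≤ 1/2, and let π be the Undefended strategy π m = (e m − d m)/(1 − D). Then: (i) the always-attack malware strategy ρ ≡ 1 maximizes u_M(π, ·) over all malware strategies; (ii) u_AM(π, 1) = D; and (iii) for every naive AM strategy π' and every malware strategy ρ', u_AM(π', ρ') ≤ D. Hence the Undefended strategy is AM-optimal in equilibrium and protects every defended machine. -/
/-- Theorem 3: Let `(e, d)` be a real-world setting with
`D = ∑ m, d m ≤ 1/2`, and let `π` be the Undefended strategy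
`π m = (e m - d m) / (1 - D)`.  Then (i) the always-attack strategy `ρ ≡ 1`
maximizes `u_M(π, ·)` over all malware strategies; (ii) `u_AM(π, 1) = D`; and
(iii) every naive AM strategy `π'` and malware strategy `ρ'` give
`u_AM(π', ρ') ≤ D`.  Hence Undefended is AM-optimal in equilibrium and protects
every defended machine.  Here
`u_M(π,ρ) = ∑ m, (e m - d m) * ρ m + (1 - ∑ m, π m * ρ m) * (∑ m, d m * ρ m)`
and `u_AM(π,ρ) = ∑ m, d m * ((1 - ρ m) + ρ m * (∑ m', π m' * ρ m'))`. -/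
theorem stmt_9 {M : Type*} [Fintype M] [Nonempty M]
    (e d : M → ℝ) (he : ∀ m, 0 ≤ e m) (hesum : ∑ m, e m = 1)
    (hd : ∀ m, 0 ≤ d m) (hde : ∀ m, d m ≤ e m)
    (hD : ∑ m, d m ≤ 1/2)
    (π : M → ℝ) (hπdef : ∀ m, π m = (e m - d m) / (1 - ∑ m', d m')) :
    (∀ ρ : M → ℝ, (∀ m, 0 ≤ ρ m ∧ ρ m ≤ 1) →
      (∑ m, (e m - d m) * ρ m) + (1 - ∑ m, π m * ρ m) * (∑ m, d m * ρ m) ≤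
        (∑ m, (e m - d m) * (1 : ℝ)) +
          (1 - ∑ m, π m * (1 : ℝ)) * (∑ m, d m * (1 : ℝ))) ∧
    (∑ m, d m * ((1 - (1 : ℝ)) + (1 : ℝ) * (∑ m', π m' * (1 : ℝ))))
        = ∑ m, d m ∧
    (∀ π' : M → ℝ, (∀ m, 0 ≤ π' m) → ∑ m, π' m ≤ 1 →
      ∀ ρ' : M → ℝ, (∀ m, 0 ≤ ρ' m ∧ ρ' m ≤ 1) →
        ∑ m, d m * ((1 - ρ' m) + ρ' m * (∑ m', π' m' * ρ' m')) ≤ ∑ m, d m) := by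
  set D := ∑ m, d m with hDdef
  have h1D : (0:ℝ) < 1 - D := by linarith
  have hed : ∑ m, (e m - d m) = 1 - D := by
    rw [Finset.sum_sub_distrib, hesum]
  have hsumπ : ∑ m, π m = 1 := by
    simp_rw [hπdef]
    rw [← Finset.sum_div, hed, div_self h1D.ne']
  refine ⟨?_, ?_, ?_⟩
  · intro ρ hρ
    have hS0 : 0 ≤ ∑ m, (e m - d m) * ρ m :=
      Finset.sum_nonneg fun m _ => mul_nonneg (by linarith [hde m]) (hρ m).1
    have hS1 : ∑ m, (e m - d m) * ρ m ≤ 1 - D := by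
      rw [← hed]
      apply Finset.sum_le_sum
      intro m _
      nlinarith [(hρ m).2, hde m]
    have hT0 : 0 ≤ ∑ m, d m * ρ m :=
      Finset.sum_nonneg fun m _ => mul_nonneg (hd m) (hρ m).1
    have hT1 : ∑ m, d m * ρ m ≤ D := by
      rw [hDdef]
      apply Finset.sum_le_sum
      intro m _
      nlinarith [(hρ m).2, hd m]
    have hπρ : ∑ m, π m * ρ m = (∑ m, (e m - d m) * ρ m) / (1 - D) := by
      simp_rw [hπdef, div_mul_eq_mul_div]
      rw [← Finset.sum_div]
    simp only [mul_one]
    rw [hπρ, hsumπ, hed]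
    set S := ∑ m, (e m - d m) * ρ m
    set T := ∑ m, d m * ρ m
    have hSd : S / (1 - D) * (1 - D) = S := div_mul_cancel₀ _ h1D.ne'
    have hP1 : S / (1 - D) ≤ 1 := by
      rw [div_le_one h1D]; exact hS1
    have hP0 : 0 ≤ S / (1 - D) := div_nonneg hS0 h1D.le
    nlinarith [mul_nonneg (sub_nonneg.2 hP1) (sub_nonneg.2 hT1)]
  · simp only [mul_one, hsumπ]
    simp
    exact hDdef.symm
  · intro π' hπ' hπ'sum ρ' hρ'
    have hP1 : ∑ m', π' m' * ρ' m' ≤ 1 := by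
      refine le_trans (Finset.sum_le_sum fun m _ => ?_) hπ'sum
      nlinarith [(hρ' m).2, hπ' m]
    have hP0 : 0 ≤ ∑ m', π' m' * ρ' m' :=
      Finset.sum_nonneg fun m _ => mul_nonneg (hπ' m) (hρ' m).1
    rw [hDdef]
    apply Finset.sum_le_sum
    intro m _
    nlinarith [mul_nonneg (mul_nonneg (hd m) (hρ' m).1) (sub_nonneg.2 hP1)]
end

section
/- For every s ∈ [0,1], the maximum over c ∈ [0,1] of c·(1 − c·s) equals 1 − s if s ≤ 1/2 and equals 1/(4·s) if s ≥ 1/2; in particular this maximum is always at least 1/4, with equality if and only if s = 1. Consequently, in the all-defended setting against a naive malware (which attacks every environment with the same probability c, obtaining utility c·(1 − c·∑_m π m)), any naive AM strategy that always creates a sandbox (∑_m π m = 1) minimizes the naive malware's best-response utility and is therefore AM-optimal. -/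
lemma aux_greatest (s : ℝ) (hs0 : 0 ≤ s) (hs1 : s ≤ 1) :
    IsGreatest {v : ℝ | ∃ c : ℝ, 0 ≤ c ∧ c ≤ 1 ∧ v = c * (1 - c * s)}
      (if s ≤ 1/2 then 1 - s else 1 / (4 * s)) := by
  by_cases h : s ≤ 1/2
  · rw [if_pos h]
    constructor
    · exact ⟨1, by norm_num⟩
    · rintro v ⟨c, hc0, hc1, rfl⟩
      nlinarith [mul_nonneg hs0 (sq_nonneg (1 - c)), sq_nonneg (1 - c)]
  · rw [if_neg h]
    push_neg at h
    have hspos : (0:ℝ) < s := by linarith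
    constructor
    · refine ⟨1/(2*s), by positivity, ?_, ?_⟩
      · rw [div_le_one (by linarith)]; linarith
      · field_simp; ring
    · rintro v ⟨c, hc0, hc1, rfl⟩
      rw [← sub_nonneg]
      have : 1 / (4 * s) - c * (1 - c * s) = s * (c - 1/(2*s))^2 := by
        field_simp; ring
      rw [this]; positivity

/-- For every `s ∈ [0,1]`, the maximum over `c ∈ [0,1]` of
`c * (1 - c * s)` equals `1 - s` if `s ≤ 1/2` and `1/(4s)` if `s ≥ 1/2`; this
maximum is always at least `1/4`, with equality iff `s = 1`.  Consequently, in
the all-defended setting against a naive malware (attacking every environment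
with the same probability `c`, obtaining utility `c * (1 - c * ∑ m, π m)`),
any naive AM strategy with `∑ m, π m = 1` (always creating a sandbox) minimizes
the naive malware's best-response utility and is therefore AM-optimal. -/
theorem stmt_14 {M : Type*} [Fintype M] [Nonempty M]
    (e : M → ℝ) (he : ∀ m, 0 ≤ e m) (hesum : ∑ m, e m = 1)
    (π : M → ℝ) (hπ : ∀ m, 0 ≤ π m) (hπsum : ∑ m, π m = 1) :
    (∀ s : ℝ, 0 ≤ s → s ≤ 1 →
      IsGreatest {v : ℝ | ∃ c : ℝ, 0 ≤ c ∧ c ≤ 1 ∧ v = c * (1 - c * s)}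
        (if s ≤ 1/2 then 1 - s else 1 / (4 * s)) ∧
      (1/4 : ℝ) ≤ (if s ≤ 1/2 then 1 - s else 1 / (4 * s)) ∧
      ((if s ≤ 1/2 then 1 - s else 1 / (4 * s)) = 1/4 ↔ s = 1)) ∧
    (∀ π' : M → ℝ, (∀ m, 0 ≤ π' m) → ∑ m, π' m ≤ 1 →
      sSup {v : ℝ | ∃ c : ℝ, 0 ≤ c ∧ c ≤ 1 ∧ v = c * (1 - c * ∑ m, π m)} ≤
        sSup {v : ℝ | ∃ c : ℝ, 0 ≤ c ∧ c ≤ 1 ∧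
          v = c * (1 - c * ∑ m, π' m)}) := by
  constructor
  · intro s hs0 hs1
    refine ⟨aux_greatest s hs0 hs1, ?_, ?_⟩
    · by_cases h : s ≤ 1/2
      · rw [if_pos h]; linarith
      · rw [if_neg h]; push_neg at h
        rw [le_div_iff₀ (by linarith)]; linarith
    · by_cases h : s ≤ 1/2
      · rw [if_pos h]
        constructor <;> intro hh <;> linarith
      · rw [if_neg h]; push_neg at h
        rw [div_eq_div_iff (by linarith) (by norm_num)]
        constructor <;> intro hh <;> linarith
  · intro π' hπ' hπ'sum
    have hs'0 : 0 ≤ ∑ m, π' m := Finset.sum_nonneg fun m _ => hπ' m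
    have h1 := aux_greatest 1 (by norm_num) (by norm_num)
    rw [if_neg (by norm_num)] at h1
    have h2 := aux_greatest (∑ m, π' m) hs'0 hπ'sum
    rw [hπsum, h1.csSup_eq, h2.csSup_eq]
    by_cases h : (∑ m, π' m) ≤ 1/2
    · rw [if_pos h]; norm_num; linarith
    · rw [if_neg h]; push_neg at h
      rw [div_le_div_iff₀ (by norm_num) (by linarith)]; linarith
end
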